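/- arXiv:1701.08446 — 3 statements merged into one kernel-verified Lean document; each statement's English description precedes it below -/
import Mathlib

section
/- The limit of log((tan x)/x) / log(π²/(π² − 4x²)) as x tends to 0 from the right equals π²/12, and the limit as x tends to π/2 from the left equals 1. -/
open Real Topology Filter

section helpers
open Set

lemma tendsto_tan_div : Tendsto (fun x : ℝ => Real.tan x / x) (𝓝[≠] 0) (𝓝 1) := by
  have h : HasDerivAt Real.tan 1 0 := by
    have := Real.hasDerivAt_tan (x := 0) (by simp); simpa using this
  refine (hasDerivAt_iff_tendsto_slope.mp h).congr fun x => ?_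
  simp [slope_def_field, Real.tan_zero]

lemma tendsto_log_one_add : Tendsto (fun t : ℝ => Real.log (1 + t) / t) (𝓝[≠] 0) (𝓝 1) := by
  have h : HasDerivAt (fun t : ℝ => Real.log (1 + t)) 1 0 := by
    have := (HasDerivAt.const_add 1 (hasDerivAt_id (0:ℝ))).log (by norm_num)
    simpa using this
  refine (hasDerivAt_iff_tendsto_slope.mp h).congr fun x => ?_
  simp [slope_def_field]

lemma tendsto_neg_log_one_sub : Tendsto (fun t : ℝ => -Real.log (1 - t) / t) (𝓝[≠] 0) (𝓝 1) := by
  have h : HasDerivAt (fun t : ℝ => -Real.log (1 - t)) 1 0 := by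
    have := ((HasDerivAt.const_sub 1 (hasDerivAt_id (0:ℝ))).log (by norm_num)).neg
    exact this.congr_deriv (by simp)
  refine (hasDerivAt_iff_tendsto_slope.mp h).congr fun x => ?_
  simp [slope_def_field]

lemma cos_pos_of_Ioo01 {x : ℝ} (hx : x ∈ Ioo (0:ℝ) 1) : 0 < Real.cos x := by
  apply Real.cos_pos_of_mem_Ioo
  constructor
  · linarith [Real.pi_gt_three, hx.1]
  · linarith [Real.pi_gt_three, hx.2]

lemma tendsto_tan_sub_div :
    Tendsto (fun x : ℝ => (Real.tan x - x) / x ^ 3) (𝓝[>] 0) (𝓝 (1/3)) := by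
  apply HasDerivAt.lhopital_zero_right_on_Ioo (f' := fun x => 1 / Real.cos x ^ 2 - 1)
    (g' := fun x => 3 * x ^ 2) (b := 1) one_pos
  · intro x hx
    exact (Real.hasDerivAt_tan (cos_pos_of_Ioo01 hx).ne').sub (hasDerivAt_id x)
  · intro x hx
    simpa using hasDerivAt_pow 3 x
  · intro x hx
    have := hx.1
    positivity
  · have : ContinuousAt (fun x : ℝ => Real.tan x - x) 0 :=
      (Real.continuousAt_tan.mpr (by simp)).sub continuousAt_id
    have h0 : Tendsto (fun x : ℝ => Real.tan x - x) (𝓝[>] 0) (𝓝 (Real.tan 0 - 0)) :=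
      this.continuousWithinAt.tendsto
    simpa using h0
  · have : Tendsto (fun x : ℝ => x ^ 3) (𝓝[>] 0) (𝓝 ((0:ℝ) ^ 3)) :=
      ((continuous_pow 3).tendsto 0).mono_left nhdsWithin_le_nhds
    simpa using this
  · have htd : Tendsto (fun x : ℝ => (Real.tan x / x) ^ 2 / 3) (𝓝[>] 0) (𝓝 (1/3)) := by
      have := (tendsto_tan_div.mono_left (nhdsWithin_mono _ (s := Set.Ioi 0) fun x h => ne_of_gt h)).pow 2
      simpa [one_div] using this.div_const 3
    refine htd.congr' ?_
    filter_upwards [Ioo_mem_nhdsGT one_pos] with x hx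
    have hc := (cos_pos_of_Ioo01 hx).ne'
    have hx0 := hx.1.ne'
    have hsc := Real.sin_sq_add_cos_sq x
    rw [Real.tan_eq_sin_div_cos]
    field_simp
    linear_combination hsc

lemma part1 : Tendsto (fun x : ℝ => Real.log (Real.tan x / x) / Real.log (π ^ 2 / (π ^ 2 - 4 * x ^ 2)))
    (𝓝[>] 0) (𝓝 (π ^ 2 / 12)) := by
  have hmem : Ioo (0:ℝ) 1 ∈ 𝓝[>] (0:ℝ) := Ioo_mem_nhdsGT one_pos
  have hgt : ∀ᶠ x : ℝ in 𝓝[>] 0, 0 < Real.tan x / x - 1 := by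
    filter_upwards [hmem] with x hx
    have h1 : x < Real.tan x := Real.lt_tan hx.1 (by linarith [Real.pi_gt_three, hx.2])
    have := (one_lt_div hx.1).mpr h1
    linarith
  have hh : Tendsto (fun x : ℝ => Real.tan x / x - 1) (𝓝[>] 0) (𝓝[>] 0) := by
    rw [tendsto_nhdsWithin_iff]
    constructor
    · have := (tendsto_tan_div.mono_left (nhdsWithin_mono _ (s := Set.Ioi 0) fun x h => ne_of_gt h)).sub_const 1
      simpa using this
    · exact hgt
  have hA : Tendsto (fun x : ℝ => Real.log (Real.tan x / x) / x ^ 2) (𝓝[>] 0) (𝓝 (1/3)) := by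
    have h1 : Tendsto (fun x : ℝ => Real.log (1 + (Real.tan x / x - 1)) / (Real.tan x / x - 1))
        (𝓝[>] 0) (𝓝 1) :=
      tendsto_log_one_add.comp (hh.mono_right (nhdsWithin_mono _ fun t ht => ne_of_gt ht))
    have h2 : Tendsto (fun x : ℝ => (Real.tan x / x - 1) / x ^ 2) (𝓝[>] 0) (𝓝 (1/3)) := by
      refine tendsto_tan_sub_div.congr' ?_
      filter_upwards [hmem] with x hx
      have hx0 := hx.1.ne'
      rw [div_sub_one hx0, div_div]
      ring_nf
    have h3 := h1.mul h2
    rw [one_mul] at h3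
    refine h3.congr' ?_
    filter_upwards [hmem, hgt] with x hx ht
    have hx2 : (x:ℝ) ^ 2 ≠ 0 := pow_ne_zero 2 hx.1.ne'
    have he : 1 + (Real.tan x / x - 1) = Real.tan x / x := by ring
    rw [he, div_mul_div_comm, mul_comm (Real.tan x / x - 1) (x ^ 2),
      mul_div_mul_right _ _ ht.ne']
  have hB : Tendsto (fun x : ℝ => Real.log (π ^ 2 / (π ^ 2 - 4 * x ^ 2)) / x ^ 2)
      (𝓝[>] 0) (𝓝 (4 / π ^ 2)) := by
    have hu : Tendsto (fun x : ℝ => 4 * x ^ 2 / π ^ 2) (𝓝[>] 0) (𝓝[≠] 0) := by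
      rw [tendsto_nhdsWithin_iff]
      constructor
      · have hc : Continuous fun x : ℝ => 4 * x ^ 2 / π ^ 2 := by continuity
        have := (hc.tendsto 0).mono_left (nhdsWithin_le_nhds (s := Ioi (0:ℝ)))
        simpa using this
      · filter_upwards [self_mem_nhdsWithin] with x hx
        have hx0 : (0:ℝ) < x := hx
        have hpi := Real.pi_pos
        have : (0:ℝ) < 4 * x ^ 2 / π ^ 2 := by positivity
        exact this.ne'
    have h1 := (tendsto_neg_log_one_sub.comp hu).mul_const (4 / π ^ 2)
    rw [one_mul] at h1
    refine h1.congr' ?_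
    filter_upwards [hmem] with x hx
    have hx0 : (0:ℝ) < x := hx.1
    have hpi := Real.pi_pos
    have hp : (0:ℝ) < π ^ 2 - 4 * x ^ 2 := by nlinarith [Real.pi_gt_three, hx.2]
    have h2 : 1 - 4 * x ^ 2 / π ^ 2 = (π ^ 2 - 4 * x ^ 2) / π ^ 2 := by field_simp
    simp only [Function.comp]
    rw [h2, Real.log_div hp.ne' (by positivity), Real.log_div (by positivity) hp.ne']
    field_simp
    ring
  have hBne : (4 / π ^ 2 : ℝ) ≠ 0 := by
    have := Real.pi_pos; positivity
  have h3 := hA.mul (hB.inv₀ hBne)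
  have hval : (1/3 : ℝ) * (4 / π ^ 2)⁻¹ = π ^ 2 / 12 := by
    rw [inv_div]; ring
  rw [hval] at h3
  refine h3.congr' ?_
  filter_upwards [hmem] with x hx
  have hx2 : (x:ℝ) ^ 2 ≠ 0 := pow_ne_zero 2 hx.1.ne'
  rw [← div_eq_mul_inv, div_div_div_cancel_right₀ hx2]

lemma aux_one {l : Filter ℝ} {φ ψ : ℝ → ℝ} {c : ℝ} (hφ : Tendsto φ l atTop)
    (hψ : Tendsto ψ l (𝓝 c)) : Tendsto (fun x => (φ x + ψ x) / φ x) l (𝓝 1) := by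
  have h0 : Tendsto (fun x => ψ x / φ x) l (𝓝 0) := hψ.div_atTop hφ
  have h1 := (tendsto_const_nhds (α := ℝ) (x := (1:ℝ)) (f := l)).add h0
  rw [add_zero] at h1
  refine h1.congr' ?_
  filter_upwards [hφ.eventually_gt_atTop 0] with x hx
  rw [add_div, div_self hx.ne']

lemma part2 : Tendsto (fun x : ℝ => Real.log (Real.tan x / x) / Real.log (π ^ 2 / (π ^ 2 - 4 * x ^ 2)))
    (𝓝[<] (π / 2)) (𝓝 1) := by
  have hpi := Real.pi_pos
  have hpi3 := Real.pi_gt_three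
  set L : ℝ → ℝ := fun x => -Real.log (π / 2 - x) with hLdef
  have hmem : Ioo (1:ℝ) (π/2) ∈ 𝓝[<] (π/2) := Ioo_mem_nhdsLT (by linarith)
  have hsub : Tendsto (fun x : ℝ => π / 2 - x) (𝓝[<] (π/2)) (𝓝[>] 0) := by
    rw [tendsto_nhdsWithin_iff]
    constructor
    · have hcont : Continuous fun x : ℝ => π / 2 - x := by continuity
      have := (hcont.tendsto (π/2)).mono_left (nhdsWithin_le_nhds (s := Iio (π/2)))
      simpa using this
    · filter_upwards [self_mem_nhdsWithin] with x hx
      exact sub_pos.mpr (mem_Iio.mp hx)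
  have hL : Tendsto L (𝓝[<] (π/2)) atTop := by
    have := Real.tendsto_log_nhdsGT_zero.comp hsub
    exact tendsto_neg_atBot_atTop.comp this
  have hcos1 : Tendsto (fun x : ℝ => Real.cos x / (π / 2 - x)) (𝓝[<] (π/2)) (𝓝 1) := by
    have h2 := ((hasDerivAt_iff_tendsto_slope.mp (Real.hasDerivAt_cos (π/2))).mono_left
      (nhdsWithin_mono _ (s := Set.Iio (π/2)) fun x hx => ne_of_lt hx)).neg
    have h3 : Tendsto (fun x : ℝ => -slope Real.cos (π/2) x) (𝓝[<] (π/2)) (𝓝 1) := by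
      simpa using h2
    refine h3.congr fun x => ?_
    have hr : π / 2 - x = -(x - π/2) := by ring
    rw [slope_def_field, Real.cos_pi_div_two, hr, div_neg, sub_zero]
  -- e and c
  set e : ℝ → ℝ := fun x => Real.log (Real.sin x) - Real.log (Real.cos x / (π/2 - x)) - Real.log x
    with hedef
  set cc : ℝ → ℝ := fun x => Real.log (π ^ 2) - Real.log 2 - Real.log (π + 2 * x) with hccdef
  have he : Tendsto e (𝓝[<] (π/2)) (𝓝 (0 - 0 - Real.log (π/2))) := by
    have t1 : Tendsto (fun x : ℝ => Real.log (Real.sin x)) (𝓝[<] (π/2)) (𝓝 0) := by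
      have hca : ContinuousAt (fun x : ℝ => Real.log (Real.sin x)) (π/2) :=
        (Real.continuousAt_log (by simp)).comp Real.continuous_sin.continuousAt
      have := hca.tendsto.mono_left (nhdsWithin_le_nhds (s := Iio (π/2)))
      simpa using this
    have t2 : Tendsto (fun x : ℝ => Real.log (Real.cos x / (π/2 - x))) (𝓝[<] (π/2)) (𝓝 0) := by
      have := ((Real.continuousAt_log one_ne_zero).tendsto).comp hcos1
      simpa [Function.comp_def] using this
    have t3 : Tendsto (fun x : ℝ => Real.log x) (𝓝[<] (π/2)) (𝓝 (Real.log (π/2))) := by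
      have hca : ContinuousAt (fun x : ℝ => Real.log x) (π/2) :=
        Real.continuousAt_log (by positivity)
      exact hca.tendsto.mono_left (nhdsWithin_le_nhds (s := Iio (π/2)))
    exact (t1.sub t2).sub t3
  have hc : Tendsto cc (𝓝[<] (π/2))
      (𝓝 (Real.log (π ^ 2) - Real.log 2 - Real.log (π + 2 * (π/2)))) := by
    have hin : ContinuousAt (fun x : ℝ => π + 2 * x) (π/2) := by fun_prop
    have hlog : ContinuousAt Real.log ((fun x : ℝ => π + 2 * x) (π/2)) :=
      Real.continuousAt_log (by positivity)
    have hca : ContinuousAt (fun x : ℝ => Real.log (π ^ 2) - Real.log 2 - Real.log (π + 2 * x))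
        (π/2) := by
      have h4 : ContinuousAt (Real.log ∘ fun x : ℝ => π + 2 * x) (π/2) :=
        ContinuousAt.comp (x := (π/2 : ℝ)) (f := fun x : ℝ => π + 2 * x) hlog hin
      exact (continuousAt_const.sub continuousAt_const).sub h4
    exact hca.tendsto.mono_left (nhdsWithin_le_nhds (s := Iio (π/2)))
  -- eventual decompositions
  have hFeq : ∀ᶠ x in 𝓝[<] (π/2), Real.log (Real.tan x / x) = L x + e x := by
    filter_upwards [hmem] with x hx
    have hx0 : (0:ℝ) < x := by linarith [hx.1]
    have hd : (0:ℝ) < π/2 - x := sub_pos.mpr hx.2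
    have hsin : 0 < Real.sin x := Real.sin_pos_of_pos_of_lt_pi hx0 (by linarith [hx.2])
    have hcos : 0 < Real.cos x := Real.cos_pos_of_mem_Ioo ⟨by linarith, hx.2⟩
    have h1 : Real.tan x / x = Real.sin x / (Real.cos x * x) := by
      rw [Real.tan_eq_sin_div_cos, div_div]
    rw [h1, Real.log_div hsin.ne' (by positivity), Real.log_mul hcos.ne' hx0.ne']
    have h2 : Real.cos x = Real.cos x / (π/2 - x) * (π/2 - x) := by
      rw [div_mul_cancel₀ _ hd.ne']
    rw [show Real.log (Real.cos x) = Real.log (Real.cos x / (π/2 - x)) + Real.log (π/2 - x) by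
      nth_rewrite 1 [h2]
      exact Real.log_mul (by positivity) hd.ne']
    simp only [hLdef, hedef]
    ring
  have hGeq : ∀ᶠ x in 𝓝[<] (π/2),
      Real.log (π ^ 2 / (π ^ 2 - 4 * x ^ 2)) = L x + cc x := by
    filter_upwards [hmem] with x hx
    have hx0 : (0:ℝ) < x := by linarith [hx.1]
    have hd : (0:ℝ) < π/2 - x := sub_pos.mpr hx.2
    have hp : (0:ℝ) < π ^ 2 - 4 * x ^ 2 := by nlinarith [hx.2]
    have h1 : π ^ 2 - 4 * x ^ 2 = 2 * (π/2 - x) * (2 * (π/2 + x)) := by ring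
    rw [Real.log_div (by positivity) hp.ne', h1,
      Real.log_mul (by positivity) (by positivity),
      Real.log_mul (by positivity) hd.ne',
      Real.log_mul (by positivity) (by positivity)]
    simp only [hLdef, hccdef]
    have h2 : Real.log (π + 2 * x) = Real.log (π/2 + x) + Real.log 2 := by
      rw [show π + 2 * x = (π/2 + x) * 2 by ring, Real.log_mul (by positivity) (by norm_num)]
    rw [h2]
    ring
  -- ratios
  have hFL : Tendsto (fun x => Real.log (Real.tan x / x) / L x) (𝓝[<] (π/2)) (𝓝 1) := by
    refine (aux_one hL he).congr' ?_
    filter_upwards [hFeq] with x hx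
    rw [hx]
  have hGL : Tendsto (fun x => Real.log (π ^ 2 / (π ^ 2 - 4 * x ^ 2)) / L x)
      (𝓝[<] (π/2)) (𝓝 1) := by
    refine (aux_one hL hc).congr' ?_
    filter_upwards [hGeq] with x hx
    rw [hx]
  have hLG : Tendsto (fun x => L x / Real.log (π ^ 2 / (π ^ 2 - 4 * x ^ 2)))
      (𝓝[<] (π/2)) (𝓝 1) := by
    have := hGL.inv₀ one_ne_zero
    rw [inv_one] at this
    refine this.congr fun x => ?_
    rw [inv_div]
  have hprod := hFL.mul hLG
  rw [mul_one] at hprod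
  refine hprod.congr' ?_
  filter_upwards [hL.eventually_gt_atTop 0] with x hx
  rw [div_mul_div_comm, mul_comm (Real.log (Real.tan x / x)) (L x),
    mul_div_mul_left _ _ hx.ne']

end helpers

theorem stmt_15 :
    Tendsto (fun x : ℝ => Real.log (Real.tan x / x) / Real.log (π ^ 2 / (π ^ 2 - 4 * x ^ 2)))
        (𝓝[>] 0) (𝓝 (π ^ 2 / 12)) ∧
      Tendsto (fun x : ℝ => Real.log (Real.tan x / x) / Real.log (π ^ 2 / (π ^ 2 - 4 * x ^ 2)))
        (𝓝[<] (π / 2)) (𝓝 1) :=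
  ⟨part1, part2⟩
end

section
/- The limit of log(cos x) / log((π² − 4x²)/π²) as x tends to 0 from the right equals π²/8. -/
open Real Topology Filter

lemma slope_log_tendsto : Tendsto (fun u : ℝ => Real.log u / (u - 1)) (𝓝[≠] (1:ℝ)) (𝓝 1) := by
  have h := Real.hasDerivAt_log (one_ne_zero)
  rw [hasDerivAt_iff_tendsto_slope] at h
  simp only [slope_fun_def_field, Real.log_one, sub_zero] at h
  simpa using h

lemma sin_div_tendsto : Tendsto (fun x : ℝ => Real.sin x / x) (𝓝[≠] (0:ℝ)) (𝓝 1) := by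
  have h := Real.hasDerivAt_sin 0
  rw [hasDerivAt_iff_tendsto_slope] at h
  simp only [slope_fun_def_field, Real.sin_zero, sub_zero, Real.cos_zero] at h
  exact h

lemma cos_sub_one_div_sq : Tendsto (fun x : ℝ => (Real.cos x - 1) / x ^ 2) (𝓝[≠] (0:ℝ))
    (𝓝 (-(1/2))) := by
  have h2 : Tendsto (fun x : ℝ => x / 2) (𝓝[≠] (0:ℝ)) (𝓝[≠] (0:ℝ)) := by
    apply tendsto_nhdsWithin_of_tendsto_nhds_of_eventually_within
    · have h : Tendsto (fun x : ℝ => x / 2) (𝓝 (0:ℝ)) (𝓝 ((0:ℝ) / 2)) :=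
        ((continuous_id (X := ℝ)).div_const 2).tendsto 0
      norm_num at h
      exact h.mono_left nhdsWithin_le_nhds
    · filter_upwards [self_mem_nhdsWithin] with x hx
      simpa using (div_ne_zero hx two_ne_zero)
  have hs : Tendsto (fun x : ℝ => Real.sin (x/2) / (x/2)) (𝓝[≠] (0:ℝ)) (𝓝 1) :=
    sin_div_tendsto.comp h2
  have key : Tendsto (fun x : ℝ => -(1/2) * ((Real.sin (x/2) / (x/2)) * (Real.sin (x/2) / (x/2))))
      (𝓝[≠] (0:ℝ)) (𝓝 (-(1/2))) := by
    have := (hs.mul hs).const_mul (-(1/2) : ℝ)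
    simpa using this
  refine key.congr' ?_
  filter_upwards [self_mem_nhdsWithin] with x hx
  have hx0 : (x:ℝ) ≠ 0 := hx
  have hcos : Real.cos x - 1 = -2 * Real.sin (x/2) ^ 2 := by
    have h1 : Real.cos (2 * (x/2)) = 2 * Real.cos (x/2) ^ 2 - 1 := Real.cos_two_mul _
    have h2 : Real.sin (x/2) ^ 2 + Real.cos (x/2) ^ 2 = 1 := Real.sin_sq_add_cos_sq _
    have : (2 : ℝ) * (x/2) = x := by ring
    rw [this] at h1
    nlinarith
  field_simp [hcos]
  ring_nf at hcos ⊢; linarith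

theorem stmt_16 :
    Tendsto (fun x : ℝ => Real.log (Real.cos x) / Real.log ((π ^ 2 - 4 * x ^ 2) / π ^ 2))
      (𝓝[>] 0) (𝓝 (π ^ 2 / 8)) := by
  have hπ : (0:ℝ) < π := pi_pos
  have hπ2 : (0:ℝ) < π ^ 2 := by positivity
  set v : ℝ → ℝ := fun x => (π ^ 2 - 4 * x ^ 2) / π ^ 2 with hv
  -- eventually x ∈ (0, π/2) and x < 1
  have hev : ∀ᶠ x in 𝓝[>] (0:ℝ), 0 < x ∧ x < π / 2 := by
    filter_upwards [Ioo_mem_nhdsGT_of_mem (⟨le_rfl, Real.pi_div_two_pos⟩ :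
        (0:ℝ) ∈ Set.Ico 0 (π/2))] with x hx
    exact ⟨hx.1, hx.2⟩
  -- basic facts for such x
  have hfacts : ∀ x : ℝ, 0 < x → x < π / 2 →
      Real.cos x - 1 < 0 ∧ v x - 1 < 0 ∧ 0 < v x := by
    intro x hx0 hx2
    have hc1 : Real.cos x < 1 := by
      have := Real.cos_lt_cos_of_nonneg_of_le_pi le_rfl
        (le_of_lt (lt_of_lt_of_le hx2 (by linarith [pi_pos]))) hx0
      simpa using this
    have hxπ : x < π := lt_of_lt_of_le hx2 (by linarith)
    have hv1 : v x - 1 < 0 := by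
      have : (0:ℝ) < 4 * x ^ 2 := by positivity
      have : v x < 1 := by
        rw [hv]; rw [div_lt_one hπ2]; linarith
      linarith
    have hv0 : 0 < v x := by
      rw [hv]
      apply div_pos _ hπ2
      nlinarith [hx2, pi_pos]
    exact ⟨by linarith, hv1, hv0⟩
  -- limit A : log (cos x) / (cos x - 1) → 1
  have hcos_t : Tendsto (fun x : ℝ => Real.cos x) (𝓝[>] 0) (𝓝[≠] (1:ℝ)) := by
    apply tendsto_nhdsWithin_of_tendsto_nhds_of_eventually_within
    · have := (Real.continuous_cos.tendsto 0).mono_left (nhdsWithin_le_nhds (s := Set.Ioi (0:ℝ)))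
      simpa using this
    · filter_upwards [hev] with x hx
      exact ne_of_lt (by linarith [(hfacts x hx.1 hx.2).1])
  have hA : Tendsto (fun x : ℝ => Real.log (Real.cos x) / (Real.cos x - 1)) (𝓝[>] 0) (𝓝 1) :=
    slope_log_tendsto.comp hcos_t
  -- limit C' : log (v x) / (v x - 1) → 1
  have hvt : Tendsto v (𝓝[>] 0) (𝓝[≠] (1:ℝ)) := by
    apply tendsto_nhdsWithin_of_tendsto_nhds_of_eventually_within
    · have hvc : Continuous v := by rw [hv]; continuity
      have h0 : v 0 = 1 := by
        rw [hv]; norm_num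
      have := (hvc.tendsto 0).mono_left (nhdsWithin_le_nhds (s := Set.Ioi (0:ℝ)))
      rwa [h0] at this
    · filter_upwards [hev] with x hx
      exact ne_of_lt (by linarith [(hfacts x hx.1 hx.2).2.1])
  have hC' : Tendsto (fun x : ℝ => Real.log (v x) / (v x - 1)) (𝓝[>] 0) (𝓝 1) :=
    slope_log_tendsto.comp hvt
  have hC : Tendsto (fun x : ℝ => (v x - 1) / Real.log (v x)) (𝓝[>] 0) (𝓝 1) := by
    have := hC'.inv₀ one_ne_zero
    simp only [inv_one] at this
    refine this.congr fun x => ?_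
    rw [inv_div]
  -- limit B : (cos x - 1) / (v x - 1) → π²/8
  have hsub : Tendsto (fun x : ℝ => (Real.cos x - 1) / x ^ 2) (𝓝[>] 0) (𝓝 (-(1/2))) :=
    cos_sub_one_div_sq.mono_left (nhdsWithin_mono _ (fun x hx => ne_of_gt hx))
  have hB : Tendsto (fun x : ℝ => (Real.cos x - 1) / (v x - 1)) (𝓝[>] 0) (𝓝 (π ^ 2 / 8)) := by
    have hmul : Tendsto (fun x : ℝ => ((Real.cos x - 1) / x ^ 2) * (-(π ^ 2 / 4)))
        (𝓝[>] 0) (𝓝 (π ^ 2 / 8)) := by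
      have := hsub.mul_const (-(π ^ 2 / 4))
      have heq : (-(1/2) : ℝ) * (-(π ^ 2 / 4)) = π ^ 2 / 8 := by ring
      rwa [heq] at this
    refine hmul.congr' ?_
    filter_upwards [self_mem_nhdsWithin] with x hx
    have hx0 : x ≠ 0 := ne_of_gt hx
    have hv1 : v x - 1 = -(4 * x ^ 2) / π ^ 2 := by
      rw [hv]; field_simp; ring
    rw [hv1]
    field_simp
    try ring
    try exact Or.inl trivial
  -- combine
  have hprod := (hA.mul hB).mul hC
  rw [one_mul, mul_one] at hprod
  refine hprod.congr' ?_
  filter_upwards [hev] with x hx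
  obtain ⟨hc, hv1, hv0⟩ := hfacts x hx.1 hx.2
  have hcne : Real.cos x - 1 ≠ 0 := ne_of_lt hc
  have hvne : v x - 1 ≠ 0 := ne_of_lt hv1
  have hlogv : Real.log (v x) ≠ 0 := by
    have : Real.log (v x) < 0 := Real.log_neg hv0 (by linarith)
    exact ne_of_lt this
  field_simp
  exact (mul_div_cancel_right₀ _ hlogv).symm
end

section
/- The limit of log((tanh x)/x) / log((π² − 4x²)/π²) as x tends to 0 from the right equals π²/12. -/
open Real Topology Filter

/-- `sinh x < x * cosh x` for `x > 0`. -/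
lemma aux_sinh_lt_mul_cosh {x : ℝ} (hx : 0 < x) : Real.sinh x < x * Real.cosh x := by
  have hd : ∀ y : ℝ, HasDerivAt (fun y : ℝ => y * Real.cosh y - Real.sinh y)
      (y * Real.sinh y) y := by
    intro y
    have h1 := ((hasDerivAt_id y).mul (Real.hasDerivAt_cosh y)).sub (Real.hasDerivAt_sinh y)
    have e : (1 * Real.cosh y + id y * Real.sinh y - Real.cosh y) = y * Real.sinh y := by
      simp only [id_eq]
      ring
    rw [e] at h1
    exact h1
  have h : StrictMonoOn (fun y : ℝ => y * Real.cosh y - Real.sinh y) (Set.Ici 0) := by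
    apply strictMonoOn_of_deriv_pos (convex_Ici 0)
    · exact (Continuous.sub (continuous_id.mul Real.continuous_cosh)
        Real.continuous_sinh).continuousOn
    · intro y hy
      rw [interior_Ici, Set.mem_Ioi] at hy
      rw [(hd y).deriv]
      exact mul_pos hy (Real.sinh_pos_iff.mpr hy)
  have := h Set.self_mem_Ici (le_of_lt hx) hx
  simp only [zero_mul, Real.cosh_zero, Real.sinh_zero, sub_zero, zero_sub] at this
  linarith

/-- `log(1+t)/t → 1` as `t → 0`, `t ≠ 0`. -/
lemma aux_log_one_add : Tendsto (fun t : ℝ => Real.log (1 + t) / t) (𝓝[≠] (0:ℝ)) (𝓝 1) := by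
  have h : HasDerivAt (fun t : ℝ => Real.log (1 + t)) 1 0 := by
    have h1 : HasDerivAt (fun t : ℝ => 1 + t) 1 0 := by
      simpa using (hasDerivAt_id (0:ℝ)).const_add (1:ℝ)
    have := (Real.hasDerivAt_log (by norm_num : (1:ℝ) + 0 ≠ 0)).comp 0 h1
    have e : ((1:ℝ) + 0)⁻¹ * 1 = 1 := by norm_num
    rw [e] at this
    exact this
  rw [hasDerivAt_iff_tendsto_slope] at h
  refine h.congr' ?_
  filter_upwards [self_mem_nhdsWithin] with t ht
  simp [slope_def_field, div_eq_div_iff]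

/-- `sinh x / x → 1` as `x → 0⁺`. -/
lemma aux_sinh_div : Tendsto (fun x : ℝ => Real.sinh x / x) (𝓝[>] (0:ℝ)) (𝓝 1) := by
  have h := Real.hasDerivAt_sinh 0
  rw [hasDerivAt_iff_tendsto_slope] at h
  rw [Real.cosh_zero] at h
  have h2 : Tendsto (slope Real.sinh 0) (𝓝[>] (0:ℝ)) (𝓝 1) :=
    h.mono_left (nhdsWithin_mono 0 (fun x hx => ne_of_gt hx))
  refine h2.congr' ?_
  filter_upwards [self_mem_nhdsWithin] with x _
  simp [slope_def_field]

/-- `(sinh x - x cosh x)/x³ → -1/3` as `x → 0⁺` (L'Hôpital). -/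
lemma aux_limB : Tendsto (fun x : ℝ => (Real.sinh x - x * Real.cosh x) / x ^ 3)
    (𝓝[>] (0:ℝ)) (𝓝 (-1/3)) := by
  apply HasDerivAt.lhopital_zero_nhdsGT
    (f' := fun x => -(x * Real.sinh x)) (g' := fun x => 3 * x ^ 2)
  · filter_upwards with x
    have h1 := (Real.hasDerivAt_sinh x).sub ((hasDerivAt_id x).mul (Real.hasDerivAt_cosh x))
    have e : Real.cosh x - (1 * Real.cosh x + id x * Real.sinh x) = -(x * Real.sinh x) := by
      simp only [id_eq]
      ring
    rw [e] at h1
    exact h1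
  · filter_upwards with x
    simpa using hasDerivAt_pow 3 x
  · filter_upwards [self_mem_nhdsWithin] with x hx
    have : (0:ℝ) < x := hx
    positivity
  · have : Tendsto (fun x : ℝ => Real.sinh x - x * Real.cosh x) (𝓝 0) (𝓝 0) := by
      have := (Real.continuous_sinh.sub (continuous_id.mul Real.continuous_cosh)).tendsto 0
      have e : (Real.sinh - id * Real.cosh : ℝ → ℝ) 0 = 0 := by simp
      rw [e] at this
      exact this
    exact this.mono_left nhdsWithin_le_nhds
  · have : Tendsto (fun x : ℝ => x ^ 3) (𝓝 (0:ℝ)) (𝓝 0) := by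
      simpa using (continuous_pow 3).tendsto (0:ℝ)
    exact this.mono_left nhdsWithin_le_nhds
  · have h : Tendsto (fun x : ℝ => -(Real.sinh x / x) / 3) (𝓝[>] (0:ℝ)) (𝓝 (-1/3)) := by
      have := ((aux_sinh_div.neg).div_const 3)
      simpa using this
    refine h.congr' ?_
    filter_upwards [self_mem_nhdsWithin] with x hx
    have hx0 : (x:ℝ) ≠ 0 := ne_of_gt hx
    field_simp

/-- `(tanh x - x)/x³ → -1/3` as `x → 0⁺`. -/
lemma aux_limC : Tendsto (fun x : ℝ => (Real.tanh x - x) / x ^ 3)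
    (𝓝[>] (0:ℝ)) (𝓝 (-1/3)) := by
  have hc : Tendsto (fun x : ℝ => 1 / Real.cosh x) (𝓝[>] (0:ℝ)) (𝓝 1) := by
    have : Tendsto (fun x : ℝ => 1 / Real.cosh x) (𝓝 (0:ℝ)) (𝓝 (1 / Real.cosh 0)) :=
      (continuous_const.div Real.continuous_cosh (fun x => (Real.cosh_pos x).ne')).tendsto 0
    simpa using this.mono_left nhdsWithin_le_nhds
  have h := aux_limB.mul hc
  rw [show (-1/3 : ℝ) * 1 = -1/3 by ring] at h
  refine h.congr' ?_
  filter_upwards [self_mem_nhdsWithin] with x hx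
  have hc0 : Real.cosh x ≠ 0 := (Real.cosh_pos x).ne'
  rw [Real.tanh_eq_sinh_div_cosh]
  field_simp

theorem stmt_17 :
    Tendsto (fun x : ℝ => Real.log (Real.tanh x / x) / Real.log ((π ^ 2 - 4 * x ^ 2) / π ^ 2))
      (𝓝[>] 0) (𝓝 (π ^ 2 / 12)) := by
  have hπ : (π:ℝ) ≠ 0 := Real.pi_ne_zero
  have hπ2 : (π:ℝ) ^ 2 ≠ 0 := pow_ne_zero 2 hπ
  -- f x = tanh x / x - 1
  set f : ℝ → ℝ := fun x => Real.tanh x / x - 1 with hf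
  have hff : ∀ x : ℝ, 0 < x → f x = (Real.tanh x - x) / x := by
    intro x hx
    have hx0 : x ≠ 0 := hx.ne'
    simp only [hf]
    field_simp
  -- f/x² → -1/3
  have hfx2 : Tendsto (fun x : ℝ => f x / x ^ 2) (𝓝[>] (0:ℝ)) (𝓝 (-1/3)) := by
    refine aux_limC.congr' ?_
    filter_upwards [self_mem_nhdsWithin] with x hx
    rw [hff x hx, div_div]
    congr 1
    ring
  -- f → 0 within ≠ 0
  have hfneg : ∀ᶠ x : ℝ in 𝓝[>] 0, f x < 0 := by
    filter_upwards [self_mem_nhdsWithin] with x hx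
    rw [hff x hx]
    apply div_neg_of_neg_of_pos _ hx
    have hc : (0:ℝ) < Real.cosh x := Real.cosh_pos x
    rw [Real.tanh_eq_sinh_div_cosh, sub_neg, div_lt_iff₀ hc]
    exact aux_sinh_lt_mul_cosh hx
  have hf0 : Tendsto f (𝓝[>] (0:ℝ)) (𝓝[≠] (0:ℝ)) := by
    have h1 : Tendsto f (𝓝[>] (0:ℝ)) (𝓝 0) := by
      have hsq : Tendsto (fun x : ℝ => x ^ 2) (𝓝[>] (0:ℝ)) (𝓝 0) := by
        have := (continuous_pow 2).tendsto (0:ℝ)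
        simpa using this.mono_left nhdsWithin_le_nhds
      have h2 := hfx2.mul hsq
      rw [mul_zero] at h2
      refine h2.congr' ?_
      filter_upwards [self_mem_nhdsWithin] with x hx
      exact div_mul_cancel₀ _ (pow_ne_zero 2 (ne_of_gt hx))
    refine tendsto_nhdsWithin_iff.mpr ⟨h1, ?_⟩
    filter_upwards [hfneg] with x hx
    exact ne_of_lt hx
  -- numerator / x² → -1/3
  have hnum : Tendsto (fun x : ℝ => Real.log (Real.tanh x / x) / x ^ 2)
      (𝓝[>] (0:ℝ)) (𝓝 (-1/3)) := by
    have hL := (aux_log_one_add.comp hf0).mul hfx2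
    rw [show (1:ℝ) * (-1/3) = -1/3 by ring] at hL
    refine hL.congr' ?_
    filter_upwards [self_mem_nhdsWithin, hfneg] with x hx hfx
    have hx0 : (x:ℝ) ≠ 0 := ne_of_gt hx
    have h1 : (1:ℝ) + f x = Real.tanh x / x := by simp [hf]
    have hfx0 : f x ≠ 0 := ne_of_lt hfx
    simp only [Function.comp_apply, h1]
    field_simp
  -- denominator / x² → -4/π²
  have hden : Tendsto (fun x : ℝ => Real.log ((π ^ 2 - 4 * x ^ 2) / π ^ 2) / x ^ 2)
      (𝓝[>] (0:ℝ)) (𝓝 (-(4 / π ^ 2))) := by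
    set t : ℝ → ℝ := fun x => -(4 * x ^ 2 / π ^ 2) with ht
    have ht0 : Tendsto t (𝓝[>] (0:ℝ)) (𝓝[≠] (0:ℝ)) := by
      refine tendsto_nhdsWithin_iff.mpr ⟨?_, ?_⟩
      · have : Tendsto t (𝓝 (0:ℝ)) (𝓝 (t 0)) := by
          apply Continuous.tendsto
          fun_prop
        simp only [ht, zero_pow, mul_zero, zero_div, neg_zero, ne_eq, OfNat.ofNat_ne_zero,
          not_false_eq_true] at this
        exact this.mono_left nhdsWithin_le_nhds
      · filter_upwards [self_mem_nhdsWithin] with x hx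
        have hx0 : (x:ℝ) ≠ 0 := ne_of_gt hx
        have hpos : (0:ℝ) < 4 * x ^ 2 / π ^ 2 := by positivity
        simp only [ht, Set.mem_compl_iff, Set.mem_singleton_iff, neg_eq_zero]
        exact hpos.ne'
    have hconst : Tendsto (fun x : ℝ => t x / x ^ 2) (𝓝[>] (0:ℝ)) (𝓝 (-(4 / π ^ 2))) := by
      have : ∀ᶠ x : ℝ in 𝓝[>] 0, t x / x ^ 2 = -(4 / π ^ 2) := by
        filter_upwards [self_mem_nhdsWithin] with x hx
        have hx0 : (x:ℝ) ≠ 0 := ne_of_gt hx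
        simp only [ht]
        field_simp
      exact tendsto_const_nhds.congr' (this.mono fun x h => h.symm)
    have hL := (aux_log_one_add.comp ht0).mul hconst
    rw [show (1:ℝ) * (-(4 / π ^ 2)) = -(4 / π ^ 2) by ring] at hL
    refine hL.congr' ?_
    filter_upwards [self_mem_nhdsWithin] with x hx
    have hx0 : (x:ℝ) ≠ 0 := ne_of_gt hx
    have htx0 : t x ≠ 0 := by
      simp only [ht, ne_eq, neg_eq_zero, div_eq_zero_iff, not_or]
      constructor
      · positivity
      · exact hπ2
    have h1 : (1:ℝ) + t x = (π ^ 2 - 4 * x ^ 2) / π ^ 2 := by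
      simp only [ht]
      field_simp
      ring
    simp only [Function.comp_apply, h1]
    field_simp
  -- combine
  have hden0 : (-(4 / π ^ 2) : ℝ) ≠ 0 := by
    simp only [ne_eq, neg_eq_zero, div_eq_zero_iff, not_or]
    exact ⟨by norm_num, hπ2⟩
  have h := hnum.div hden hden0
  have heq : ((-1/3 : ℝ)) / (-(4 / π ^ 2)) = π ^ 2 / 12 := by
    field_simp
    ring
  rw [heq] at h
  refine h.congr' ?_
  filter_upwards [self_mem_nhdsWithin] with x hx
  have hx0 : (x:ℝ) ^ 2 ≠ 0 := pow_ne_zero 2 (ne_of_gt hx)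
  simp only [Pi.div_apply]
  rw [div_div_div_cancel_right₀ hx0]
end
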